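/- arXiv:2203.09670 — 2 statements merged into one kernel-verified Lean document; each statement's English description precedes it below -/
import Mathlib

section
/- Let S and n be positive integers, let γ ∈ (0,1), let P ∈ ℝ^{S×S} be a row-stochastic matrix (all entries nonnegative and each row summing to 1), and let d ∈ ℝ^S be a probability vector (nonnegative entries summing to 1) that is stationary for P, i.e. d_j = Σ_i d_i P_{ij} for every j. Let D = diag(d) and let √D denote its entrywise square root. Let Π̄ ∈ ℝ^{S×S} be an orthogonal projection matrix (Π̄ᵀ = Π̄ and Π̄² = Π̄), let Φ ∈ ℝ^{n×S} be a matrix whose i-th column is φ_i ∈ ℝ^n, and set M = Π̄ √D (I − γP) Φᵀ. Then for every c ∈ ℝ^S, the gradient of the quadratic loss ω ↦ (1/2)‖Mω − c‖², i.e. the map ω ↦ Mᵀ(Mω − c), is Lipschitz continuous with constant ℓ = (1+γ)² · max_i ‖φ_i‖²: for all ω₁, ω₂ ∈ ℝ^n, ‖Mᵀ(Mω₁ − c) − Mᵀ(Mω₂ − c)‖ ≤ (1+γ)² (max_i ‖φ_i‖²) ‖ω₁ − ω₂‖. -/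
open scoped BigOperators

/-- Euclidean norm of a vector in `ℝ^k`. -/
noncomputable def enorm {k : ℕ} (v : Fin k → ℝ) : ℝ := Real.sqrt (∑ i, (v i) ^ 2)

lemma enorm_nonneg' {k : ℕ} (v : Fin k → ℝ) : 0 ≤ _root_.enorm v := Real.sqrt_nonneg _

lemma enorm_sq {k : ℕ} (v : Fin k → ℝ) : _root_.enorm v ^ 2 = ∑ i, (v i) ^ 2 :=
  Real.sq_sqrt (Finset.sum_nonneg fun i _ => sq_nonneg _)

lemma enorm_le_of_sq_le {k : ℕ} {v : Fin k → ℝ} {C : ℝ} (hC : 0 ≤ C)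
    (h : ∑ i, (v i) ^ 2 ≤ C ^ 2) : _root_.enorm v ≤ C := by
  have := Real.sqrt_le_sqrt h
  rwa [Real.sqrt_sq hC] at this

lemma dot_le_enorm {k : ℕ} (u v : Fin k → ℝ) : ∑ i, u i * v i ≤ _root_.enorm u * _root_.enorm v := by
  have h2 : (∑ i, u i * v i) ^ 2 ≤ (_root_.enorm u * _root_.enorm v) ^ 2 := by
    rw [mul_pow, enorm_sq, enorm_sq]
    exact Finset.sum_mul_sq_le_sq_mul_sq Finset.univ u v
  have hnn : (0:ℝ) ≤ _root_.enorm u * _root_.enorm v := by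
    have := enorm_nonneg' u; have := enorm_nonneg' v; positivity
  nlinarith [le_abs_self (∑ i, u i * v i), sq_abs (∑ i, u i * v i),
    abs_nonneg (∑ i, u i * v i)]

lemma enorm_smul' {k : ℕ} (a : ℝ) (v : Fin k → ℝ) : _root_.enorm (a • v) = |a| * _root_.enorm v := by
  unfold _root_.enorm
  rw [← Real.sqrt_sq_eq_abs, ← Real.sqrt_mul (sq_nonneg _)]
  congr 1
  rw [Finset.mul_sum]
  exact Finset.sum_congr rfl fun i _ => by simp [mul_pow]

lemma enorm_triangle {k : ℕ} (u v : Fin k → ℝ) : _root_.enorm (u + v) ≤ _root_.enorm u + _root_.enorm v := by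
  have hu := enorm_nonneg' u; have hv := enorm_nonneg' v
  apply enorm_le_of_sq_le (by positivity)
  have hsum : ∑ i, ((u + v) i) ^ 2
      = (∑ i, (u i)^2) + 2*(∑ i, u i * v i) + ∑ i, (v i)^2 := by
    rw [Finset.mul_sum, ← Finset.sum_add_distrib, ← Finset.sum_add_distrib]
    refine Finset.sum_congr rfl fun i _ => by simp [Pi.add_apply]; ring
  have hd := dot_le_enorm u v
  have h1 := enorm_sq u; have h2 := enorm_sq v
  nlinarith

/-- If `‖A x‖ ≤ C ‖x‖` for all `x`, then `‖Aᵀ y‖ ≤ C ‖y‖` for all `y`. -/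
lemma transpose_bound {a b : ℕ} (A : Matrix (Fin a) (Fin b) ℝ) (C : ℝ) (hC : 0 ≤ C)
    (h : ∀ x, _root_.enorm (A.mulVec x) ≤ C * _root_.enorm x) (y : Fin a → ℝ) :
    _root_.enorm (A.transpose.mulVec y) ≤ C * _root_.enorm y := by
  set w := A.transpose.mulVec y with hw
  have hsq : _root_.enorm w ^ 2 = ∑ i, y i * (A.mulVec w) i := by
    rw [enorm_sq]
    have : ∑ i, (w i)^2 = dotProduct w w := by
      simp [dotProduct, sq]
    rw [this]
    have h1 : dotProduct y (A.mulVec w) = dotProduct (Matrix.vecMul y A) w :=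
      Matrix.dotProduct_mulVec y A w
    have h2 : Matrix.vecMul y A = w := by rw [hw, Matrix.mulVec_transpose]
    rw [show (∑ i, y i * (A.mulVec w) i) = dotProduct y (A.mulVec w) from rfl, h1, h2]
  have hchain : _root_.enorm w ^ 2 ≤ _root_.enorm y * (C * _root_.enorm w) := by
    rw [hsq]
    calc ∑ i, y i * (A.mulVec w) i ≤ _root_.enorm y * _root_.enorm (A.mulVec w) := dot_le_enorm _ _
      _ ≤ _root_.enorm y * (C * _root_.enorm w) := by
          have := h w
          exact mul_le_mul_of_nonneg_left this (enorm_nonneg' y)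
  rcases eq_or_lt_of_le (enorm_nonneg' w) with h0 | h0
  · rw [← h0]; exact mul_nonneg hC (enorm_nonneg' y)
  · have : _root_.enorm w * _root_.enorm w ≤ (C * _root_.enorm y) * _root_.enorm w := by nlinarith
    exact le_of_mul_le_mul_right this h0
  
/-- Symmetric idempotent matrices are contractions. -/
lemma proj_contraction {a : ℕ} (Q : Matrix (Fin a) (Fin a) ℝ)
    (h1 : Q.transpose = Q) (h2 : Q * Q = Q) (u : Fin a → ℝ) :
    _root_.enorm (Q.mulVec u) ≤ _root_.enorm u := by
  set w := Q.mulVec u with hw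
  have hsq : _root_.enorm w ^ 2 = ∑ i, u i * (Q.mulVec w) i := by
    rw [enorm_sq]
    have hdot : ∑ i, (w i)^2 = dotProduct w w := by
      simp [dotProduct, sq]
    rw [hdot]
    have hA : dotProduct u (Q.mulVec w) = dotProduct (Matrix.vecMul u Q) w :=
      Matrix.dotProduct_mulVec u Q w
    have hB : Matrix.vecMul u Q = w := by
      rw [← Matrix.mulVec_transpose, h1, hw]
    rw [show (∑ i, u i * (Q.mulVec w) i) = dotProduct u (Q.mulVec w) from rfl, hA, hB]
  have hQw : Q.mulVec w = w := by
    rw [hw, Matrix.mulVec_mulVec, h2]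
  rcases eq_or_lt_of_le (enorm_nonneg' w) with h0 | h0
  · rw [← h0]; exact enorm_nonneg' u
  · have hchain : _root_.enorm w ^ 2 ≤ _root_.enorm u * _root_.enorm w := by
      rw [hsq, hQw]; exact dot_le_enorm _ _
    nlinarith

/-- The gradient of the quadratic MSPBE loss `ω ↦ (1/2)‖Mω − c‖²` is Lipschitz with
constant `(1+γ)² · maxᵢ ‖φᵢ‖²`, where `M = Π̄ √D (I − γP) Φᵀ`. -/
theorem mspbe_gradient_lipschitz
    (S n : ℕ) (hS : 0 < S) (hn : 0 < n)
    (γ : ℝ) (hγ : γ ∈ Set.Ioo (0 : ℝ) 1)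
    (P : Matrix (Fin S) (Fin S) ℝ)
    (hPnn : ∀ i j, 0 ≤ P i j) (hProw : ∀ i, ∑ j, P i j = 1)
    (d : Fin S → ℝ) (hdnn : ∀ i, 0 ≤ d i) (hdsum : ∑ i, d i = 1)
    (hstat : ∀ j, d j = ∑ i, d i * P i j)
    (Pibar : Matrix (Fin S) (Fin S) ℝ)
    (hproj1 : Pibar.transpose = Pibar) (hproj2 : Pibar * Pibar = Pibar)
    (Φ : Matrix (Fin n) (Fin S) ℝ)
    (M : Matrix (Fin S) (Fin n) ℝ)
    (hM : M = Pibar * Matrix.diagonal (fun i => Real.sqrt (d i)) *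
        ((1 : Matrix (Fin S) (Fin S) ℝ) - γ • P) * Φ.transpose)
    (c : Fin S → ℝ) (ω₁ ω₂ : Fin n → ℝ) :
    _root_.enorm (M.transpose.mulVec (M.mulVec ω₁ - c) - M.transpose.mulVec (M.mulVec ω₂ - c)) ≤
      (1 + γ) ^ 2 *
        (Finset.univ.sup' ⟨⟨0, hS⟩, Finset.mem_univ _⟩ fun i => (_root_.enorm fun j => Φ j i) ^ 2) *
        _root_.enorm (ω₁ - ω₂) := by
  obtain ⟨hγ0, hγ1⟩ := hγ
  set m := Finset.univ.sup' ⟨⟨0, hS⟩, Finset.mem_univ _⟩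
    (fun i => (_root_.enorm fun j => Φ j i) ^ 2) with hm
  have hm_ge : ∀ i, (_root_.enorm fun j => Φ j i) ^ 2 ≤ m := fun i =>
    Finset.le_sup' (fun i => (_root_.enorm fun j => Φ j i) ^ 2) (Finset.mem_univ i)
  have hm_nn : 0 ≤ m := le_trans (sq_nonneg _) (hm_ge ⟨0, hS⟩)
  set K := (1 + γ) * Real.sqrt m with hK
  have hK_nn : 0 ≤ K := by positivity
  -- main vector bound for M
  have hMbound : ∀ x, _root_.enorm (M.mulVec x) ≤ K * _root_.enorm x := by
    intro x
    set u := Φ.transpose.mulVec x with hu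
    have hu_apply : ∀ i, u i = ∑ j, Φ j i * x j := by
      intro i
      simp [hu, Matrix.mulVec, dotProduct, Matrix.transpose_apply]
    -- u i = φ_i ⬝ x, bound |u i|² ≤ ‖φ_i‖² ‖x‖²
    have hu_sq : ∀ i, (u i)^2 ≤ m * (_root_.enorm x)^2 := by
      intro i
      have hcs := Finset.sum_mul_sq_le_sq_mul_sq Finset.univ (fun j => Φ j i) x
      rw [hu_apply i]
      calc (∑ j, Φ j i * x j)^2 ≤ (∑ j, (Φ j i)^2) * ∑ j, (x j)^2 := hcs
        _ = (_root_.enorm fun j => Φ j i)^2 * (_root_.enorm x)^2 := by rw [enorm_sq, enorm_sq]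
        _ ≤ m * (_root_.enorm x)^2 := by
            exact mul_le_mul_of_nonneg_right (hm_ge i) (sq_nonneg _)
    -- weighted norm bound for u
    have hwu : _root_.enorm (fun i => Real.sqrt (d i) * u i) ≤ Real.sqrt m * _root_.enorm x := by
      apply enorm_le_of_sq_le (mul_nonneg (Real.sqrt_nonneg m) (enorm_nonneg' x))
      have : ∑ i, (Real.sqrt (d i) * u i)^2 ≤ ∑ i, d i * (m * (_root_.enorm x)^2) := by
        apply Finset.sum_le_sum
        intro i _
        rw [mul_pow, Real.sq_sqrt (hdnn i)]
        exact mul_le_mul_of_nonneg_left (hu_sq i) (hdnn i)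
      calc ∑ i, (Real.sqrt (d i) * u i)^2 ≤ ∑ i, d i * (m * (_root_.enorm x)^2) := this
        _ = (∑ i, d i) * (m * (_root_.enorm x)^2) := by rw [← Finset.sum_mul]
        _ = m * (_root_.enorm x)^2 := by rw [hdsum, one_mul]
        _ = (Real.sqrt m * _root_.enorm x)^2 := by
            rw [mul_pow, Real.sq_sqrt hm_nn]
    -- weighted norm of P u is ≤ weighted norm of u
    have hwPu : _root_.enorm (fun i => Real.sqrt (d i) * (P.mulVec u) i)
        ≤ _root_.enorm (fun i => Real.sqrt (d i) * u i) := by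
      have hsum : ∑ i, (Real.sqrt (d i) * (P.mulVec u) i)^2
          ≤ ∑ i, (Real.sqrt (d i) * u i)^2 := by
        have jensen : ∀ i, ((P.mulVec u) i)^2 ≤ ∑ j, P i j * (u j)^2 := by
          intro i
          have hcs := Finset.sum_mul_sq_le_sq_mul_sq Finset.univ
            (fun j => Real.sqrt (P i j)) (fun j => Real.sqrt (P i j) * u j)
          have e1 : ∀ j, Real.sqrt (P i j) * (Real.sqrt (P i j) * u j) = P i j * u j := by
            intro j; rw [← mul_assoc, Real.mul_self_sqrt (hPnn i j)]
          have e2 : ∀ j, (Real.sqrt (P i j))^2 = P i j := fun j => Real.sq_sqrt (hPnn i j)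
          have e3 : ∀ j, (Real.sqrt (P i j) * u j)^2 = P i j * (u j)^2 := by
            intro j; rw [mul_pow, e2]
          simp only [e1, e2, e3] at hcs
          rw [hProw i, one_mul] at hcs
          have : (P.mulVec u) i = ∑ j, P i j * u j := by
            simp [Matrix.mulVec, dotProduct]
          rw [this]; exact hcs
        calc ∑ i, (Real.sqrt (d i) * (P.mulVec u) i)^2
            ≤ ∑ i, d i * ∑ j, P i j * (u j)^2 := by
              apply Finset.sum_le_sum
              intro i _
              rw [mul_pow, Real.sq_sqrt (hdnn i)]
              exact mul_le_mul_of_nonneg_left (jensen i) (hdnn i)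
          _ = ∑ j, (∑ i, d i * P i j) * (u j)^2 := by
              have step : ∑ i, d i * ∑ j, P i j * (u j)^2
                  = ∑ i, ∑ j, d i * P i j * (u j)^2 :=
                Finset.sum_congr rfl fun i _ => by
                  rw [Finset.mul_sum]
                  exact Finset.sum_congr rfl fun j _ => (mul_assoc _ _ _).symm
              rw [step, Finset.sum_comm]
              exact Finset.sum_congr rfl fun j _ => (Finset.sum_mul _ _ _).symm
          _ = ∑ j, (Real.sqrt (d j) * u j)^2 := by
              congr 1; ext j
              rw [← hstat j, mul_pow, Real.sq_sqrt (hdnn j)]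
      exact Real.sqrt_le_sqrt hsum
    -- decompose M.mulVec x
    have hdiagvec : ∀ z : Fin S → ℝ,
        (Matrix.diagonal fun i => Real.sqrt (d i)).mulVec z
          = fun i => Real.sqrt (d i) * z i := by
      intro z; funext i; exact Matrix.mulVec_diagonal _ _ _
    have hMx : M.mulVec x = Pibar.mulVec
        (fun i => Real.sqrt (d i) * (((1 : Matrix (Fin S) (Fin S) ℝ) - γ • P).mulVec u) i) := by
      rw [hM, ← Matrix.mulVec_mulVec, ← Matrix.mulVec_mulVec, ← Matrix.mulVec_mulVec,
        hdiagvec, hu]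
    have hzdec : (fun i => Real.sqrt (d i) * (((1 : Matrix (Fin S) (Fin S) ℝ) - γ • P).mulVec u) i)
        = (fun i => Real.sqrt (d i) * u i) + (-γ) • (fun i => Real.sqrt (d i) * (P.mulVec u) i) := by
      ext i
      have : ((1 : Matrix (Fin S) (Fin S) ℝ) - γ • P).mulVec u
          = u - γ • (P.mulVec u) := by
        rw [Matrix.sub_mulVec, Matrix.one_mulVec, Matrix.smul_mulVec]
      rw [this]
      simp [Pi.add_apply, Pi.smul_apply, smul_eq_mul]
      ring
    calc _root_.enorm (M.mulVec x)
        ≤ _root_.enorm (fun i => Real.sqrt (d i) * (((1 : Matrix (Fin S) (Fin S) ℝ) - γ • P).mulVec u) i) := by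
          rw [hMx]; exact proj_contraction Pibar hproj1 hproj2 _
      _ ≤ _root_.enorm (fun i => Real.sqrt (d i) * u i)
          + _root_.enorm ((-γ) • (fun i => Real.sqrt (d i) * (P.mulVec u) i)) := by
          rw [hzdec]; exact enorm_triangle _ _
      _ = _root_.enorm (fun i => Real.sqrt (d i) * u i)
          + γ * _root_.enorm (fun i => Real.sqrt (d i) * (P.mulVec u) i) := by
          rw [enorm_smul', abs_neg, abs_of_pos hγ0]
      _ ≤ Real.sqrt m * _root_.enorm x + γ * (Real.sqrt m * _root_.enorm x) := by
          have := mul_le_mul_of_nonneg_left (hwPu.trans hwu) (le_of_lt hγ0)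
          exact add_le_add hwu this
      _ = K * _root_.enorm x := by rw [hK]; ring
  -- transpose bound
  have hMTbound := transpose_bound M K hK_nn hMbound
  -- simplify the gradient difference
  have hgrad : M.transpose.mulVec (M.mulVec ω₁ - c) - M.transpose.mulVec (M.mulVec ω₂ - c)
      = M.transpose.mulVec (M.mulVec (ω₁ - ω₂)) := by
    rw [← Matrix.mulVec_sub, sub_sub_sub_cancel_right, Matrix.mulVec_sub, ← Matrix.mulVec_sub, ← Matrix.mulVec_sub]
  rw [hgrad]
  calc _root_.enorm (M.transpose.mulVec (M.mulVec (ω₁ - ω₂)))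
      ≤ K * _root_.enorm (M.mulVec (ω₁ - ω₂)) := hMTbound _
    _ ≤ K * (K * _root_.enorm (ω₁ - ω₂)) := by
        exact mul_le_mul_of_nonneg_left (hMbound _) hK_nn
    _ = (1 + γ)^2 * m * _root_.enorm (ω₁ - ω₂) := by
        have hss : Real.sqrt m * Real.sqrt m = m := Real.mul_self_sqrt hm_nn
        rw [hK, show ((1 + γ) * Real.sqrt m) * (((1 + γ) * Real.sqrt m) * _root_.enorm (ω₁ - ω₂))
            = (1 + γ)^2 * (Real.sqrt m * Real.sqrt m) * _root_.enorm (ω₁ - ω₂) from by ring, hss]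
end

section
/- Let E and F be real inner product spaces, let Θ ≥ 0, let g : E → F be Θ-Lipschitz, let D ≥ 2 and 1 ≤ B ≤ D be integers, and let d_1, …, d_D ∈ E. Let ḡ = (1/D) Σ_{i=1}^D g(d_i), d̄ = (1/D) Σ_{i=1}^D d_i, and σ² = (1/D) Σ_{i=1}^D ‖d_i − d̄‖². Then the average over all B-element subsets S of {1,…,D} of the squared deviation of the mini-batch gradient mean from the full mean satisfies (1/C(D,B)) Σ_{S ⊆ {1,…,D}, |S|=B} ‖(1/B) Σ_{i∈S} g(d_i) − ḡ‖² ≤ 2 (1 − B/D) (σ²/B) Θ², where C(D,B) is the binomial coefficient. -/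
open scoped BigOperators

lemma count_subsets_containing {α : Type*} [DecidableEq α] (u t : Finset α) (ht : t ⊆ u)
    (B : ℕ) (htB : t.card ≤ B) :
    ((Finset.powersetCard B u).filter (fun s => t ⊆ s)).card
      = (u.card - t.card).choose (B - t.card) := by
  have key : ((Finset.powersetCard B u).filter (fun s => t ⊆ s)).card
      = ((u \ t).powersetCard (B - t.card)).card := by
    apply Finset.card_nbij' (fun s => s \ t) (fun v => v ∪ t)
    · intro s hs
      simp only [Finset.mem_coe, Finset.mem_filter, Finset.mem_powersetCard] at hs ⊢
      exact ⟨Finset.sdiff_subset_sdiff hs.1.1 le_rfl,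
        by rw [Finset.card_sdiff_of_subset hs.2, hs.1.2]⟩
    · intro v hv
      simp only [Finset.mem_coe, Finset.mem_powersetCard] at hv
      have hdisj : Disjoint v t :=
        Finset.disjoint_of_subset_left hv.1 Finset.sdiff_disjoint
      simp only [Finset.mem_coe, Finset.mem_filter, Finset.mem_powersetCard]
      refine ⟨⟨Finset.union_subset (hv.1.trans Finset.sdiff_subset) ht, ?_⟩,
        Finset.subset_union_right⟩
      rw [Finset.card_union_of_disjoint hdisj, hv.2, Nat.sub_add_cancel htB]
    · intro s hs
      simp only [Finset.mem_coe, Finset.mem_filter] at hs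
      exact Finset.sdiff_union_of_subset hs.2
    · intro v hv
      simp only [Finset.mem_coe, Finset.mem_powersetCard] at hv
      exact Finset.union_sdiff_cancel_right
        (Finset.disjoint_of_subset_left hv.1 Finset.sdiff_disjoint)
  rw [key, Finset.card_powersetCard, Finset.card_sdiff_of_subset ht]

lemma sum_sq_pair_expand {V : Type*} [NormedAddCommGroup V] [InnerProductSpace ℝ V]
    {n : ℕ} (v : Fin n → V) (hv : ∑ i, v i = 0) :
    ∑ i, ∑ j, ‖v i - v j‖ ^ 2 = 2 * n * ∑ i, ‖v i‖ ^ 2 := by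
  have expand : ∀ i j : Fin n, ‖v i - v j‖ ^ 2
      = ‖v i‖ ^ 2 - 2 * (inner ℝ (v i) (v j) : ℝ) + ‖v j‖ ^ 2 :=
    fun i j => norm_sub_sq_real _ _
  simp_rw [expand]
  simp only [Finset.sum_add_distrib, Finset.sum_sub_distrib, ← Finset.mul_sum,
    ← inner_sum, hv, inner_zero_right, Finset.sum_const, Finset.card_univ,
    Fintype.card_fin, nsmul_eq_mul, mul_zero, sub_zero]
  ring

lemma coef_algebra (C Br Dr S : ℝ) (hD : Dr ≠ 0) (hD1 : Dr - 1 ≠ 0) (hB : Br ≠ 0)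
    (hC : C ≠ 0) :
    C⁻¹ * ((Br⁻¹)^2 * (((Br * C / Dr) - (Br - 1) * (Br * C / Dr) / (Dr - 1)) * S))
      = (Dr - Br) / (Br * Dr * (Dr - 1)) * S := by
  field_simp
  ring

set_option maxHeartbeats 1000000 in
/-- Mini-batch SGD noise characterization: if the per-sample gradient map `g` is `Θ`-Lipschitz
in the data point and a mini-batch of size `B` is drawn uniformly without replacement from a
dataset of size `D ≥ 2` with data variance `σ²`, then the expected squared deviation of the
mini-batch gradient mean from the full gradient mean is at most `2(1 − B/D)(σ²/B)Θ²`. -/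
theorem minibatch_sgd_noise_bound
    (E F : Type*) [NormedAddCommGroup E] [InnerProductSpace ℝ E]
    [NormedAddCommGroup F] [InnerProductSpace ℝ F]
    (Θ : ℝ) (hΘ : 0 ≤ Θ) (g : E → F)
    (hg : ∀ x y, ‖g x - g y‖ ≤ Θ * ‖x - y‖)
    (D B : ℕ) (hD : 2 ≤ D) (hB1 : 1 ≤ B) (hBD : B ≤ D)
    (d : Fin D → E)
    (gbar : F) (hgbar : gbar = (D : ℝ)⁻¹ • ∑ i, g (d i))
    (dbar : E) (hdbar : dbar = (D : ℝ)⁻¹ • ∑ i, d i)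
    (σ2 : ℝ) (hσ2 : σ2 = (D : ℝ)⁻¹ * ∑ i, ‖d i - dbar‖ ^ 2) :
    (D.choose B : ℝ)⁻¹ *
        ∑ s ∈ Finset.powersetCard B (Finset.univ : Finset (Fin D)),
          ‖((B : ℝ)⁻¹ • ∑ i ∈ s, g (d i)) - gbar‖ ^ 2 ≤
      2 * (1 - (B : ℝ) / (D : ℝ)) * (σ2 / (B : ℝ)) * Θ ^ 2 := by
  classical
  have hDR : (0:ℝ) < (D:ℝ) := by exact_mod_cast Nat.lt_of_lt_of_le Nat.zero_lt_two hD
  have hBR : (0:ℝ) < (B:ℝ) := by exact_mod_cast hB1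
  have hDne : (D:ℝ) ≠ 0 := ne_of_gt hDR
  have hBne : (B:ℝ) ≠ 0 := ne_of_gt hBR
  have hD2R : (2:ℝ) ≤ (D:ℝ) := by exact_mod_cast hD
  have hD1R : (0:ℝ) < (D:ℝ) - 1 := by linarith
  set P := Finset.powersetCard B (Finset.univ : Finset (Fin D)) with hP
  set h : Fin D → F := fun i => g (d i) - gbar with hh
  -- the centered gradients sum to zero
  have hsum : ∑ i, h i = 0 := by
    simp only [hh, Finset.sum_sub_distrib, Finset.sum_const, Finset.card_univ,
      Fintype.card_fin]
    rw [hgbar, ← Nat.cast_smul_eq_nsmul ℝ, smul_smul, mul_inv_cancel₀ hDne,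
      one_smul, sub_self]
  have hksum : ∑ i, (d i - dbar) = 0 := by
    simp only [Finset.sum_sub_distrib, Finset.sum_const, Finset.card_univ,
      Fintype.card_fin]
    rw [hdbar, ← Nat.cast_smul_eq_nsmul ℝ, smul_smul, mul_inv_cancel₀ hDne,
      one_smul, sub_self]
  -- rewrite each summand
  have hterm : ∀ s ∈ P, ((B : ℝ)⁻¹ • ∑ i ∈ s, g (d i)) - gbar
      = (B:ℝ)⁻¹ • ∑ i ∈ s, h i := by
    intro s hs
    rw [hP, Finset.mem_powersetCard] at hs
    have hb : (B:ℝ)⁻¹ • (B • gbar) = gbar := by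
      rw [← Nat.cast_smul_eq_nsmul ℝ, smul_smul, inv_mul_cancel₀ hBne, one_smul]
    simp only [hh, Finset.sum_sub_distrib, Finset.sum_const, hs.2, smul_sub, hb]
  -- expand the squared norm of a partial sum
  have hsq : ∀ s : Finset (Fin D), ‖∑ i ∈ s, h i‖ ^ 2
      = ∑ i, ∑ j, (if i ∈ s ∧ j ∈ s then (inner ℝ (h i) (h j) : ℝ) else 0) := by
    intro s
    have hss : ‖∑ i ∈ s, h i‖ ^ 2 = ∑ i ∈ s, ∑ j ∈ s, (inner ℝ (h i) (h j) : ℝ) := by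
      rw [← real_inner_self_eq_norm_sq, sum_inner]
      exact Finset.sum_congr rfl fun i _ => inner_sum _ _ _
    rw [hss, eq_comm]
    calc ∑ i, ∑ j, (if i ∈ s ∧ j ∈ s then (inner ℝ (h i) (h j) : ℝ) else 0)
        = ∑ i, (if i ∈ s then ∑ j ∈ s, (inner ℝ (h i) (h j) : ℝ) else 0) := by
          refine Finset.sum_congr rfl fun i _ => ?_
          by_cases hi : i ∈ s
          · simp only [hi, true_and, if_true]
            rw [Finset.sum_ite_mem, Finset.univ_inter]
          · simp [hi]
      _ = ∑ i ∈ s, ∑ j ∈ s, (inner ℝ (h i) (h j) : ℝ) := by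
          rw [Finset.sum_ite_mem, Finset.univ_inter]
  -- counting
  set N1 : ℕ := (D-1).choose (B-1) with hN1def
  set N2 : ℕ := if 2 ≤ B then (D-2).choose (B-2) else 0 with hN2def
  have hcnt : ∀ i j : Fin D, (P.filter fun s => i ∈ s ∧ j ∈ s).card
      = if i = j then N1 else N2 := by
    intro i j
    by_cases hij : i = j
    · subst hij
      rw [if_pos rfl]
      have hc := count_subsets_containing (Finset.univ : Finset (Fin D)) {i}
        (Finset.subset_univ _) B (by simpa using hB1)
      simp only [Finset.card_univ, Fintype.card_fin, Finset.card_singleton] at hc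
      rw [hN1def, ← hc]
      congr 1
      apply Finset.filter_congr
      intro s _
      simp [Finset.singleton_subset_iff]
    · rw [if_neg hij]
      have hcond : ∀ s : Finset (Fin D),
          (i ∈ s ∧ j ∈ s) ↔ ({i, j} : Finset (Fin D)) ⊆ s := by
        intro s
        rw [Finset.insert_subset_iff, Finset.singleton_subset_iff]
      have hcard2 : ({i, j} : Finset (Fin D)).card = 2 := by
        rw [Finset.card_insert_of_notMem (by simpa using hij), Finset.card_singleton]
      by_cases hB2 : 2 ≤ B
      · have hc := count_subsets_containing (Finset.univ : Finset (Fin D)) {i, j}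
          (Finset.subset_univ _) B (by rw [hcard2]; exact hB2)
        simp only [Finset.card_univ, Fintype.card_fin, hcard2] at hc
        rw [hN2def, if_pos hB2, ← hc]
        congr 1
        apply Finset.filter_congr
        intro s _
        simp [hcond s]
      · rw [hN2def, if_neg hB2]
        rw [Finset.card_eq_zero, Finset.filter_eq_empty_iff]
        intro s hs
        rw [hP, Finset.mem_powersetCard] at hs
        rintro ⟨hi, hj⟩
        have hsub : ({i, j} : Finset (Fin D)) ⊆ s := (hcond s).1 ⟨hi, hj⟩
        have h2 : 2 ≤ s.card := by
          have := Finset.card_le_card hsub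
          rwa [hcard2] at this
        omega
  -- swap sums
  have hswap : ∑ s ∈ P, ‖∑ i ∈ s, h i‖ ^ 2
      = ∑ i, ∑ j, (((if i = j then N1 else N2 : ℕ)) : ℝ) * (inner ℝ (h i) (h j) : ℝ) := by
    simp_rw [hsq]
    rw [Finset.sum_comm]
    refine Finset.sum_congr rfl fun i _ => ?_
    rw [Finset.sum_comm]
    refine Finset.sum_congr rfl fun j _ => ?_
    rw [← Finset.sum_filter, Finset.sum_const, nsmul_eq_mul, hcnt i j]
  -- the full double inner-product sum vanishes
  have hinner_total : ∑ i, ∑ j, (inner ℝ (h i) (h j) : ℝ) = 0 := by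
    calc ∑ i, ∑ j, (inner ℝ (h i) (h j) : ℝ)
        = ∑ i, (inner ℝ (h i) (∑ j, h j) : ℝ) :=
          Finset.sum_congr rfl fun i _ => (inner_sum _ _ _).symm
      _ = 0 := by simp [hsum]
  set S := ∑ i, ‖h i‖ ^ 2 with hS
  have htotal : ∑ s ∈ P, ‖∑ i ∈ s, h i‖ ^ 2 = ((N1:ℝ) - N2) * S := by
    rw [hswap]
    have hsplit : ∀ i j : Fin D,
        (((if i = j then N1 else N2 : ℕ)) : ℝ) * (inner ℝ (h i) (h j) : ℝ)
        = (N2:ℝ) * (inner ℝ (h i) (h j) : ℝ)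
          + (if i = j then ((N1:ℝ) - N2) * (inner ℝ (h i) (h j) : ℝ) else 0) := by
      intro i j
      by_cases hij : i = j <;> simp [hij] <;> ring
    simp_rw [hsplit, Finset.sum_add_distrib, ← Finset.mul_sum]
    rw [hinner_total, mul_zero, zero_add]
    simp_rw [Finset.sum_ite_eq, Finset.mem_univ, if_true,
      real_inner_self_eq_norm_sq]
    rw [← Finset.mul_sum]
  -- ratio identities
  have hC : (0:ℝ) < (D.choose B : ℝ) := by exact_mod_cast Nat.choose_pos hBD
  have hnat1 : D * N1 = D.choose B * B := by
    have := Nat.add_one_mul_choose_eq (D-1) (B-1)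
    have e1 : D - 1 + 1 = D := by omega
    have e2 : B - 1 + 1 = B := by omega
    rw [e1, e2] at this
    exact this
  have hN1v : (N1:ℝ) = (B:ℝ) * (D.choose B : ℝ) / D := by
    rw [eq_div_iff hDne]
    have := congrArg (Nat.cast (R := ℝ)) hnat1
    push_cast at this
    linarith
  have hN2v : (N2:ℝ) = ((B:ℝ) - 1) * (N1:ℝ) / ((D:ℝ) - 1) := by
    rw [eq_div_iff (ne_of_gt hD1R)]
    by_cases hB2 : 2 ≤ B
    · have h2 := Nat.add_one_mul_choose_eq (D-2) (B-2)
      have e1 : D - 2 + 1 = D - 1 := by omega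
      have e2 : B - 2 + 1 = B - 1 := by omega
      rw [e1, e2] at h2
      have hN2eq : N2 = (D-2).choose (B-2) := if_pos hB2
      have := congrArg (Nat.cast (R := ℝ)) h2
      push_cast [Nat.cast_sub (show 1 ≤ D by omega),
        Nat.cast_sub (show 1 ≤ B by omega)] at this
      rw [hN2eq]
      linarith
    · have hBeq : B = 1 := by omega
      have hN2eq : N2 = 0 := if_neg hB2
      rw [hN2eq, hBeq]
      push_cast
      ring
  -- bound on S
  have hSnn : 0 ≤ S := Finset.sum_nonneg fun i _ => sq_nonneg _
  have hTval : ∑ i, ‖d i - dbar‖ ^ 2 = (D:ℝ) * σ2 := by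
    rw [hσ2]
    field_simp
  have hSbound : S ≤ Θ^2 * ((D:ℝ) * σ2) := by
    have h1 := sum_sq_pair_expand h hsum
    have h2 := sum_sq_pair_expand (fun i => d i - dbar) hksum
    have hle : ∑ i, ∑ j, ‖h i - h j‖^2
        ≤ Θ^2 * ∑ i, ∑ j, ‖(d i - dbar) - (d j - dbar)‖^2 := by
      rw [Finset.mul_sum]
      refine Finset.sum_le_sum fun i _ => ?_
      rw [Finset.mul_sum]
      refine Finset.sum_le_sum fun j _ => ?_
      have hhd : h i - h j = g (d i) - g (d j) := by
        simp only [hh]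
        abel
      have hdd : (d i - dbar) - (d j - dbar) = d i - d j := by abel
      rw [hhd, hdd, ← mul_pow]
      exact pow_le_pow_left₀ (norm_nonneg _) (hg (d i) (d j)) 2
    rw [h1, h2, hTval] at hle
    nlinarith
  -- put everything together
  have hstep : ∀ s ∈ P, ‖((B : ℝ)⁻¹ • ∑ i ∈ s, g (d i)) - gbar‖ ^ 2
      = ((B:ℝ)⁻¹)^2 * ‖∑ i ∈ s, h i‖^2 := by
    intro s hs
    rw [hterm s hs, norm_smul, mul_pow, Real.norm_eq_abs, sq_abs]
  rw [Finset.sum_congr rfl hstep, ← Finset.mul_sum, htotal]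
  have hval : (D.choose B:ℝ)⁻¹ * (((B:ℝ)⁻¹)^2 * (((N1:ℝ) - N2) * S))
      = ((D:ℝ) - B) / ((B:ℝ) * D * ((D:ℝ)-1)) * S := by
    rw [hN2v, hN1v]
    exact coef_algebra _ _ _ _ hDne (ne_of_gt hD1R) hBne (ne_of_gt hC)
  rw [hval]
  have hDBnn : (0:ℝ) ≤ (D:ℝ) - B := by
    have : (B:ℝ) ≤ D := by exact_mod_cast hBD
    linarith
  have hσnn : 0 ≤ σ2 := by
    rw [hσ2]
    have : 0 ≤ ∑ i, ‖d i - dbar‖ ^ 2 := Finset.sum_nonneg fun i _ => sq_nonneg _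
    positivity
  calc ((D:ℝ)-B)/((B:ℝ)*D*((D:ℝ)-1)) * S
      ≤ ((D:ℝ)-B)/((B:ℝ)*D*((D:ℝ)-1)) * (Θ^2*((D:ℝ)*σ2)) :=
        mul_le_mul_of_nonneg_left hSbound (by positivity)
    _ ≤ 2 * (1 - (B:ℝ)/D) * (σ2/B) * Θ^2 := by
        have hX : (0:ℝ) ≤ ((D:ℝ)-B)*σ2*Θ^2 := by positivity
        have hL2 : ((D:ℝ)-B)/((B:ℝ)*D*((D:ℝ)-1)) * (Θ^2*((D:ℝ)*σ2))
            = ((D:ℝ)-B)*σ2*Θ^2/((B:ℝ)*((D:ℝ)-1)) := by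
          field_simp
        have hR2 : 2 * (1 - (B:ℝ)/D) * (σ2/B) * Θ^2
            = 2*(((D:ℝ)-B)*σ2*Θ^2)/((D:ℝ)*B) := by
          field_simp
        rw [hL2, hR2, div_le_div_iff₀ (by positivity) (by positivity)]
        nlinarith [mul_nonneg hX (show (0:ℝ) ≤ (D:ℝ)-2 by linarith), mul_nonneg hX hBR.le]
end
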